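/- Let (Ω, λ) be a probability space and T : Ω → Ω a measure-preserving ergodic transformation. Let f : Ω → ℝ be a non-negative measurable function and define g : Ω → ℝ by g(ω) := f(Tω) − f(ω). If g ∈ L¹(Ω, λ), then for λ-almost every ω ∈ Ω one has lim_{n→∞} f(Tⁿω)/n = 0. -/

import Mathlib

open MeasureTheory Filter Topology

private lemma freq_succ {P : ℕ → Prop} :
    (∃ᶠ n in atTop, P (n + 1)) ↔ (∃ᶠ n in atTop, P n) := by
  rw [frequently_atTop, frequently_atTop]
  constructor
  · intro h a
    obtain ⟨b, hb, hP⟩ := h a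
    exact ⟨b + 1, le_trans hb (Nat.le_succ b), hP⟩
  · intro h a
    obtain ⟨b, hb, hP⟩ := h (a + 1)
    obtain ⟨c, rfl⟩ : ∃ c, b = c + 1 := ⟨b - 1, by omega⟩
    exact ⟨c, by omega, hP⟩

/-- Katznelson–Weiss style maximal lemma: if `φ ≥ 0` is integrable with `∫ φ < c`,
then a.e. the Birkhoff sums eventually satisfy `S_n ≤ c n + k` for some `k`. -/
private lemma kw {Ω : Type*} [MeasurableSpace Ω] (lam : Measure Ω) [IsProbabilityMeasure lam]
    (T : Ω → Ω) (hT : Ergodic T lam) (φ : Ω → ℝ) (hm : Measurable φ) (h0 : ∀ ω, 0 ≤ φ ω)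
    (hi : Integrable φ lam) (c : ℝ) (hc : 0 < c) (hint : ∫ ω, φ ω ∂lam < c) :
    ∀ᵐ ω ∂lam, ∃ k : ℕ, ∀ᶠ n in atTop, birkhoffSum T φ n ω ≤ c * n + k := by
  have hTm : Measurable T := hT.toMeasurePreserving.measurable
  have Sdef : ∀ n ω, birkhoffSum T φ n ω = ∑ k ∈ Finset.range n, φ (T^[k] ω) := fun _ _ => rfl
  have Smeas : ∀ n, Measurable (fun ω => birkhoffSum T φ n ω) := by
    intro n
    simp only [Sdef]
    exact Finset.measurable_sum _ fun k _ => hm.comp (hTm.iterate k)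
  set F : Set Ω := {ω | ∀ k : ℕ, ∃ᶠ n in atTop, c * n + k < birkhoffSum T φ n ω} with hFdef
  have memF : ∀ ω, ω ∈ F ↔ ∀ r : ℝ, ∃ᶠ n in atTop, c * n + r < birkhoffSum T φ n ω := by
    intro ω
    constructor
    · intro h r
      obtain ⟨k, hk⟩ := exists_nat_ge r
      exact (h k).mono fun n hn => lt_of_le_of_lt (by linarith) hn
    · intro h k
      exact h k
  have hFmeas : MeasurableSet F := by
    have : F = ⋂ (k : ℕ), ⋂ (m : ℕ), ⋃ (n : ℕ), ⋃ (_ : m ≤ n),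
        {ω | c * n + k < birkhoffSum T φ n ω} := by
      ext ω
      simp [hFdef, frequently_atTop, Set.mem_iInter, Set.mem_iUnion]
    rw [this]
    exact MeasurableSet.iInter fun k => MeasurableSet.iInter fun m =>
      MeasurableSet.iUnion fun n => MeasurableSet.iUnion fun _ =>
        measurableSet_lt measurable_const (Smeas n)
  have key : ∀ ω n, birkhoffSum T φ n (T ω) = birkhoffSum T φ (n + 1) ω - φ ω := by
    intro ω n
    rw [birkhoffSum_succ' T φ n ω]
    ring
  have hFinv : T ⁻¹' F = F := by
    ext ω
    simp only [Set.mem_preimage]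
    rw [memF, memF]
    constructor
    · intro h r
      have h1 := h (r + c)
      have h2 : ∃ᶠ n in atTop, c * ((n : ℕ) + 1 : ℕ) + r < birkhoffSum T φ (n + 1) ω := by
        refine h1.mono fun n hn => ?_
        rw [key] at hn
        have := h0 ω
        push_cast
        linarith
      exact freq_succ.mp h2
    · intro h r
      have h1 := h (r + φ ω)
      have h2 := freq_succ.mpr h1
      refine h2.mono fun n hn => ?_
      rw [key]
      push_cast at hn ⊢
      linarith
  rcases hT.toPreErgodic.ae_empty_or_univ hFmeas hFinv with hF0 | hF1
  · have hnull : lam F = 0 := ae_eq_empty.mp hF0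
    have := measure_eq_zero_iff_ae_notMem.mp hnull
    refine this.mono fun ω hω => ?_
    simp only [hFdef, Set.mem_setOf_eq, not_forall, not_frequently, not_lt] at hω
    exact hω
  · exfalso
    have hFone : ∀ᵐ ω ∂lam, ω ∈ F := by
      have : lam Fᶜ = 0 := ae_eq_univ.mp hF1
      exact measure_eq_zero_iff_ae_notMem.mp this |>.mono fun ω h => not_not.mp h
    -- the bad sets
    set B : ℕ → Set Ω := fun N => {ω | ∀ n ∈ Finset.Icc 1 N, birkhoffSum T φ n ω ≤ c * n}
      with hBdef
    have hBmeas : ∀ N, MeasurableSet (B N) := by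
      intro N
      have : B N = ⋂ (n : ℕ), ⋂ (_ : n ∈ Finset.Icc 1 N), {ω | birkhoffSum T φ n ω ≤ c * n} := by
        ext ω; simp [hBdef]
      rw [this]
      exact MeasurableSet.iInter fun n => MeasurableSet.iInter fun _ =>
        measurableSet_le (Smeas n) measurable_const
    have hBanti : Antitone B := by
      intro N M hNM ω hω n hn
      exact hω n (Finset.mem_Icc.mpr ⟨(Finset.mem_Icc.mp hn).1,
        le_trans (Finset.mem_Icc.mp hn).2 hNM⟩)
    have hInter : lam (⋂ N, B N) = 0 := by
      rw [measure_eq_zero_iff_ae_notMem]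
      refine hFone.mono fun ω hω hmem => ?_
      have h1 := hω 0
      obtain ⟨n, hlt, hn1⟩ := (h1.and_eventually (eventually_ge_atTop 1)).exists
      rw [Set.mem_iInter] at hmem
      have := hmem n n (Finset.mem_Icc.mpr ⟨hn1, le_refl n⟩)
      push_cast at hlt
      linarith
    have htends : Tendsto (fun N => lam (B N)) atTop (𝓝 0) := by
      have := tendsto_measure_iInter_atTop (fun N => (hBmeas N).nullMeasurableSet) hBanti
        ⟨0, measure_ne_top lam _⟩
      rwa [hInter] at this
    set ε : ℝ := (c - ∫ ω, φ ω ∂lam) / 2 with hεdef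
    have hε : 0 < ε := by simp only [hεdef]; linarith
    have hεc : 0 < ε / c := div_pos hε hc
    obtain ⟨N, hN⟩ := (htends.eventually_lt_const (by
      exact ENNReal.ofReal_pos.mpr hεc)).exists
    have htoReal : (lam (B N)).toReal < ε / c := by
      have h1 : (lam (B N)).toReal < (ENNReal.ofReal (ε / c)).toReal :=
        ENNReal.toReal_strict_mono ENNReal.ofReal_ne_top hN
      rwa [ENNReal.toReal_ofReal hεc.le] at h1
    -- modified function
    set φt : Ω → ℝ := fun ω => φ ω + Set.indicator (B N) (fun _ => c) ω with hφtdef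
    have hφt0 : ∀ ω, 0 ≤ φt ω := by
      intro ω
      have := Set.indicator_nonneg (s := B N) (f := fun _ : Ω => c) (fun _ _ => hc.le) ω
      have := h0 ω
      simp only [hφtdef]; linarith
    have hφtint : Integrable φt lam := hi.add ((integrable_const c).indicator (hBmeas N))
    have hφtgeφ : ∀ ω, φ ω ≤ φt ω := by
      intro ω
      have := Set.indicator_nonneg (s := B N) (f := fun _ : Ω => c) (fun _ _ => hc.le) ω
      simp only [hφtdef]; linarith
    have hφtB : ∀ ω ∈ B N, c ≤ φt ω := by
      intro ω hω
      simp only [hφtdef, Set.indicator_of_mem hω]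
      have := h0 ω; linarith
    have Stdef : ∀ n ω, birkhoffSum T φt n ω = ∑ k ∈ Finset.range n, φt (T^[k] ω) :=
      fun _ _ => rfl
    -- the key covering estimate
    have claim : ∀ L : ℕ, ∀ ω, c * ((L : ℝ) - N) ≤ birkhoffSum T φt L ω := by
      intro L
      induction L using Nat.strong_induction_on with
      | _ L IH =>
        intro ω
        have hSnn : 0 ≤ birkhoffSum T φt L ω := by
          rw [Stdef]
          exact Finset.sum_nonneg fun i _ => hφt0 _
        by_cases hL : (L : ℝ) ≤ (N : ℝ)
        · nlinarith
        · push_neg at hL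
          have hNL : N < L := by exact_mod_cast Nat.cast_lt.mp hL
          by_cases hω : ω ∈ B N
          · have hL1 : L = 1 + (L - 1) := by omega
            rw [hL1, birkhoffSum_add]
            have hIH := IH (L - 1) (by omega) (T^[1] ω)
            have h1 : c ≤ φt ω := hφtB ω hω
            have hS1 : birkhoffSum T φt 1 ω = φt ω := birkhoffSum_one T φt ω
            have hcast : ((L - 1 : ℕ) : ℝ) = (L : ℝ) - 1 := by
              have : 1 ≤ L := by omega
              push_cast [this]; ring
            rw [hS1, ← hL1]
            rw [hcast] at hIH
            linarith
          · simp only [hBdef, Set.mem_setOf_eq, not_forall] at hω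
            obtain ⟨n, hnmem, hlt⟩ := hω
            push_neg at hlt
            obtain ⟨hn1, hnN⟩ := Finset.mem_Icc.mp hnmem
            have hnL : n < L := by omega
            have hdecomp : L = n + (L - n) := by omega
            rw [hdecomp, birkhoffSum_add]
            have hIH := IH (L - n) (by omega) (T^[n] ω)
            have hmono : birkhoffSum T φ n ω ≤ birkhoffSum T φt n ω := by
              rw [Sdef, Stdef]
              exact Finset.sum_le_sum fun i _ => hφtgeφ _
            have hcast : ((L - n : ℕ) : ℝ) = (L : ℝ) - n := by
              push_cast [hnL.le]; ring
            rw [hcast] at hIH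
            rw [← hdecomp]
            have hcN : c * (n : ℝ) ≤ c * (N : ℝ) := by
              have : (n : ℝ) ≤ N := by exact_mod_cast hnN
              nlinarith
            linarith
    -- integrate
    have hcompint : ∀ k : ℕ, Integrable (fun ω => φt (T^[k] ω)) lam := by
      intro k
      exact ((hT.toMeasurePreserving.iterate k).integrable_comp
        hφtint.aestronglyMeasurable).mpr hφtint
    have hSint : ∀ n, Integrable (fun ω => birkhoffSum T φt n ω) lam := by
      intro n
      have : (fun ω => birkhoffSum T φt n ω)
          = fun ω => ∑ k ∈ Finset.range n, φt (T^[k] ω) := rfl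
      rw [this]
      exact integrable_finset_sum _ fun k _ => hcompint k
    have hcomp : ∀ k : ℕ, ∫ ω, φt (T^[k] ω) ∂lam = ∫ ω, φt ω ∂lam := by
      intro k
      have hmap := (hT.toMeasurePreserving.iterate k).map_eq
      calc ∫ ω, φt (T^[k] ω) ∂lam
          = ∫ y, φt y ∂(Measure.map (T^[k]) lam) := by
            rw [integral_map (hTm.iterate k).aemeasurable
              (by rw [hmap]; exact hφtint.aestronglyMeasurable)]
        _ = ∫ y, φt y ∂lam := by rw [hmap]
    have hSintegral : ∀ n : ℕ, ∫ ω, birkhoffSum T φt n ω ∂lam = n * ∫ ω, φt ω ∂lam := by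
      intro n
      have h1 : (fun ω => birkhoffSum T φt n ω)
          = fun ω => ∑ k ∈ Finset.range n, φt (T^[k] ω) := rfl
      rw [h1, integral_finset_sum _ fun k _ => hcompint k]
      simp only [hcomp]
      rw [Finset.sum_const, Finset.card_range, nsmul_eq_mul]
    have hφtintegral : ∫ ω, φt ω ∂lam = (∫ ω, φ ω ∂lam) + c * (lam (B N)).toReal := by
      simp only [hφtdef]
      rw [integral_add hi ((integrable_const c).indicator (hBmeas N))]
      rw [integral_indicator_const c (hBmeas N)]
      simp [mul_comm]
      exact Or.inl rfl
    -- pick L large and contradict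
    set L : ℕ := ⌊c * N / ε⌋₊ + 1 with hLdef
    have hLgt : c * N / ε < L := by
      rw [hLdef]; push_cast; exact Nat.lt_floor_add_one _
    have hL1 : (1 : ℝ) ≤ L := by
      have : 1 ≤ L := by omega
      exact_mod_cast this
    have h1 : c * ((L : ℝ) - N) ≤ L * ((∫ ω, φ ω ∂lam) + c * (lam (B N)).toReal) := by
      have := integral_mono (integrable_const (c * ((L : ℝ) - N))) (hSint L) (claim L)
      rw [integral_const, hSintegral L, hφtintegral] at this
      simpa using this
    have h2 : c * (lam (B N)).toReal ≤ ε :=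
      calc c * (lam (B N)).toReal ≤ c * (ε / c) :=
            mul_le_mul_of_nonneg_left htoReal.le hc.le
        _ = ε := by field_simp
    have hLpos : (0 : ℝ) < L := by linarith
    have h3 : (L : ℝ) * ((∫ ω, φ ω ∂lam) + c * (lam (B N)).toReal)
        ≤ L * (c - ε) := by
      have : (∫ ω, φ ω ∂lam) + c * (lam (B N)).toReal ≤ c - ε := by
        simp only [hεdef] at h2 ⊢
        linarith
      nlinarith
    have h4 : ε * L ≤ c * N := by nlinarith
    have h5 : c * N < ε * L := by
      have := (div_lt_iff₀ hε).mp hLgt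
      linarith
    linarith

/-- **Sublinear growth along orbits of ergodic transformations.**
Let `(Ω, λ)` be a probability space and `T : Ω → Ω` a measure-preserving ergodic
transformation.  Let `f : Ω → ℝ` be a non-negative measurable function and define
`g(ω) := f(Tω) − f(ω)`.  If `g ∈ L¹(Ω, λ)`, then for `λ`-almost every `ω` one has
`lim_{n→∞} f(Tⁿ ω)/n = 0`. -/
theorem stmt_0 {Ω : Type*} [MeasurableSpace Ω] (lam : Measure Ω) [IsProbabilityMeasure lam]
    (T : Ω → Ω) (hT : Ergodic T lam)
    (f : Ω → ℝ) (hf_meas : Measurable f) (hf_nonneg : ∀ ω, 0 ≤ f ω)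
    (hg : Integrable (fun ω => f (T ω) - f ω) lam) :
    ∀ᵐ ω ∂lam, Tendsto (fun n : ℕ => f (T^[n] ω) / n) atTop (𝓝 0) := by
  have hTm : Measurable T := hT.toMeasurePreserving.measurable
  set g : Ω → ℝ := fun ω => f (T ω) - f ω with hgdef
  have hgmeas : Measurable g := (hf_meas.comp hTm).sub hf_meas
  set φ : ℕ → Ω → ℝ := fun M ω =>
    max (g ω - (min (f (T ω)) M - min (f ω) M)) 0 with hφdef
  have hφmeas : ∀ M, Measurable (φ M) := by
    intro M
    exact (((hgmeas.sub (((hf_meas.comp hTm).min measurable_const).sub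
      (hf_meas.min measurable_const)))).max measurable_const)
  have hφ0 : ∀ M ω, 0 ≤ φ M ω := fun M ω => le_max_right _ 0
  have hminlip : ∀ (a b : ℝ) (M : ℝ), min a M - min b M ≤ |a - b| := by
    intro a b M
    rcases le_total b M with h | h
    · rw [min_eq_left h]
      have h1 : min a M ≤ a := min_le_left _ _
      have := le_abs_self (a - b)
      linarith
    · rw [min_eq_right h]
      have h1 : min a M ≤ M := min_le_right _ _
      have := abs_nonneg (a - b)
      linarith
  have hbound : ∀ M ω, |φ M ω| ≤ 2 * |g ω| := by
    intro M ω
    have h1 : min (f (T ω)) (M : ℝ) - min (f ω) M ≤ |g ω| := by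
      have := hminlip (f (T ω)) (f ω) M
      simpa [hgdef] using this
    have h2 : -(|g ω|) ≤ min (f (T ω)) (M : ℝ) - min (f ω) M := by
      have := hminlip (f ω) (f (T ω)) M
      rw [abs_sub_comm] at this
      simp only [hgdef]
      linarith [this]
    have h3 : g ω ≤ |g ω| := le_abs_self _
    have h4 : 0 ≤ φ M ω := hφ0 M ω
    rw [abs_of_nonneg h4]
    simp only [hφdef]
    rw [max_le_iff]
    constructor
    · linarith [abs_nonneg (g ω)]
    · positivity
  have hφint : ∀ M, Integrable (φ M) lam := by
    intro M
    refine ((hg.abs.const_mul 2).mono (hφmeas M).aestronglyMeasurable ?_)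
    filter_upwards with ω
    rw [Real.norm_eq_abs, Real.norm_eq_abs, abs_of_nonneg (by positivity : (0:ℝ) ≤ 2 * |g ω|)]
    exact hbound M ω
  have htend : Tendsto (fun M => ∫ ω, φ M ω ∂lam) atTop (𝓝 0) := by
    have h0 : (0 : ℝ) = ∫ (_ : Ω), (0 : ℝ) ∂lam := by simp
    rw [h0]
    refine tendsto_integral_of_dominated_convergence (fun ω => 2 * |g ω|)
      (fun M => (hφmeas M).aestronglyMeasurable) (hg.abs.const_mul 2)
      (fun M => Filter.Eventually.of_forall fun ω => by
        rw [Real.norm_eq_abs]; exact hbound M ω) ?_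
    filter_upwards with ω
    have hev : (fun M : ℕ => φ M ω) =ᶠ[atTop] fun _ => (0 : ℝ) := by
      filter_upwards [eventually_ge_atTop (⌈max (f ω) (f (T ω))⌉₊)] with M hM
      have hMr : max (f ω) (f (T ω)) ≤ (M : ℝ) :=
        le_trans (Nat.le_ceil _) (by exact_mod_cast hM)
      have h1 : f ω ≤ (M : ℝ) := le_trans (le_max_left _ _) hMr
      have h2 : f (T ω) ≤ (M : ℝ) := le_trans (le_max_right _ _) hMr
      simp [hφdef, hgdef, min_eq_left h1, min_eq_left h2]
    exact Tendsto.congr' hev.symm tendsto_const_nhds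
  -- per-j eventual bound
  have key : ∀ j : ℕ, ∀ᵐ ω ∂lam, ∀ᶠ n in atTop, f (T^[n] ω) ≤ (n : ℝ) / ((j : ℝ) + 1) := by
    intro j
    set q : ℝ := 1 / ((j : ℝ) + 1) with hqdef
    have hq : 0 < q := by positivity
    have hc : 0 < q / 2 := by positivity
    obtain ⟨M, hM⟩ := (htend.eventually_lt_const hc).exists
    have kwres := kw lam T hT (φ M) (hφmeas M) (hφ0 M) (hφint M) (q / 2) hc hM
    filter_upwards [kwres] with ω hω
    obtain ⟨k, hk⟩ := hω
    -- telescoping bound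
    have tel : ∀ n : ℕ, f (T^[n] ω)
        ≤ (M : ℝ) + (f ω - min (f ω) M) + birkhoffSum T (φ M) n ω := by
      intro n
      have hsum : ∑ i ∈ Finset.range n,
          ((f (T^[i+1] ω) - min (f (T^[i+1] ω)) (M : ℝ))
            - (f (T^[i] ω) - min (f (T^[i] ω)) (M : ℝ)))
          = (f (T^[n] ω) - min (f (T^[n] ω)) (M : ℝ)) - (f ω - min (f ω) M) := by
        rw [Finset.sum_range_sub (fun i => f (T^[i] ω) - min (f (T^[i] ω)) (M : ℝ)) n]
        simp
      have hterm : ∀ i, (f (T^[i+1] ω) - min (f (T^[i+1] ω)) (M : ℝ))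
          - (f (T^[i] ω) - min (f (T^[i] ω)) (M : ℝ)) ≤ φ M (T^[i] ω) := by
        intro i
        have hit : T^[i+1] ω = T (T^[i] ω) := Function.iterate_succ_apply' T i ω
        rw [hit]
        simp only [hφdef, hgdef]
        exact le_trans (le_of_eq (by ring)) (le_max_left _ 0)
      have hSsum : birkhoffSum T (φ M) n ω = ∑ i ∈ Finset.range n, φ M (T^[i] ω) := rfl
      have h1 : (f (T^[n] ω) - min (f (T^[n] ω)) (M : ℝ)) - (f ω - min (f ω) M)
          ≤ birkhoffSum T (φ M) n ω := by
        rw [← hsum, hSsum]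
        exact Finset.sum_le_sum fun i _ => hterm i
      have h2 : min (f (T^[n] ω)) (M : ℝ) ≤ M := min_le_right _ _
      linarith
    -- conclude eventual bound
    have hev1 : ∀ᶠ n : ℕ in atTop,
        ((M : ℝ) + (f ω - min (f ω) M) + (k : ℝ)) ≤ q / 2 * (n : ℝ) := by
      have htop : Tendsto (fun n : ℕ => q / 2 * (n : ℝ)) atTop atTop :=
        (tendsto_natCast_atTop_atTop (R := ℝ)).const_mul_atTop hc
      exact htop.eventually_ge_atTop _
    filter_upwards [hk, hev1, eventually_ge_atTop 1] with n h1 h2 hn1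
    have h3 : f (T^[n] ω) ≤ (M : ℝ) + (f ω - min (f ω) M) + (q / 2 * n + k) :=
      le_trans (tel n) (by linarith)
    have h4 : f (T^[n] ω) ≤ q * n := by linarith
    have : q * (n : ℝ) = (n : ℝ) / ((j : ℝ) + 1) := by
      rw [hqdef]; ring
    linarith [this ▸ h4]
  have all : ∀ᵐ ω ∂lam, ∀ j : ℕ, ∀ᶠ n in atTop, f (T^[n] ω) ≤ (n : ℝ) / ((j : ℝ) + 1) :=
    (ae_all_iff).mpr key
  filter_upwards [all] with ω hω
  rw [Metric.tendsto_atTop]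
  intro ε hε
  obtain ⟨j, hj⟩ := exists_nat_one_div_lt hε
  obtain ⟨N, hN⟩ := eventually_atTop.mp (hω j)
  refine ⟨max N 1, fun n hn => ?_⟩
  have hnN : N ≤ n := le_trans (le_max_left _ _) hn
  have hn1 : 1 ≤ n := le_trans (le_max_right _ _) hn
  have hnpos : (0 : ℝ) < n := by exact_mod_cast hn1
  have hfn : f (T^[n] ω) ≤ (n : ℝ) / ((j : ℝ) + 1) := hN n hnN
  have hnonneg : 0 ≤ f (T^[n] ω) / (n : ℝ) := div_nonneg (hf_nonneg _) (Nat.cast_nonneg n)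
  rw [Real.dist_eq, sub_zero, abs_of_nonneg hnonneg]
  have h1 : f (T^[n] ω) / (n : ℝ) ≤ ((n : ℝ) / ((j : ℝ) + 1)) / n := by gcongr
  have h2 : ((n : ℝ) / ((j : ℝ) + 1)) / n = 1 / ((j : ℝ) + 1) := by
    field_simp
  calc f (T^[n] ω) / (n : ℝ) ≤ 1 / ((j : ℝ) + 1) := by rw [← h2]; exact h1
    _ < ε := hj
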